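/- Let E be a finite-dimensional real inner product space and Λ ⊂ E a full-rank lattice. The map from the dual lattice Λ* to the group of continuous homomorphisms E/Λ → ℝ/ℤ sending y ∈ Λ* to the character (x mod Λ) ↦ (⟨x,y⟩ mod ℤ) is an isomorphism of topological groups from Λ* (with the discrete topology) onto the Pontryagin dual of the compact group E/Λ. -/

import Mathlib

set_option maxHeartbeats 1000000
set_option synthInstance.maxHeartbeats 200000

open scoped RealInnerProductSpace
open scoped Real

section Aux

/-- Classification of continuous characters of `ℝ` with values in `ℂ`. -/
lemma char_exp_aux (χ : ℝ → ℂ) (hcont : Continuous χ) (h0 : χ 0 = 1)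
    (hadd : ∀ s t, χ (s + t) = χ s * χ t) :
    ∃ l : ℂ, ∀ t, χ t = Complex.exp (l * t) := by
  obtain ⟨δ, hδ, hsmall⟩ : ∃ δ > 0, ∀ s, |s - 0| < δ → ‖χ s - 1‖ < 1/2 := by
    have := Metric.continuousAt_iff.mp (hcont.continuousAt (x := (0:ℝ))) (ε := 1/2) (by norm_num)
    obtain ⟨δ, hδ, h⟩ := this
    exact ⟨δ, hδ, fun s hs => by
      simpa [h0, Complex.dist_eq, Real.dist_eq] using h (by simpa [Real.dist_eq] using hs)⟩
  set a : ℝ := δ/2 with ha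
  have ha0 : 0 < a := by positivity
  set I₀ : ℂ := ∫ s in (0:ℝ)..a, χ s with hI₀
  have hInt : ∀ u v : ℝ, IntervalIntegrable χ MeasureTheory.volume u v :=
    fun u v => hcont.intervalIntegrable u v
  have hI₀ne : I₀ ≠ 0 := by
    have key : ‖I₀ - a‖ ≤ 1/2 * a := by
      have : I₀ - (a:ℂ) = ∫ s in (0:ℝ)..a, (χ s - 1) := by
        rw [intervalIntegral.integral_sub (hInt 0 a) (intervalIntegrable_const)]
        simp
        exact hI₀
      rw [this]
      have := intervalIntegral.norm_integral_le_of_norm_le_const (C := 1/2)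
        (f := fun s => χ s - 1) (a := (0:ℝ)) (b := a) ?_
      · simpa [abs_of_pos ha0] using this
      · intro x hx
        rw [Set.uIoc_of_le ha0.le] at hx
        exact (hsmall x (by rw [sub_zero]; rw [abs_of_pos hx.1]; linarith [hx.2])).le
    intro h
    rw [h] at key
    simp only [zero_sub, norm_neg] at key
    rw [Complex.norm_real, Real.norm_eq_abs, abs_of_pos ha0] at key
    linarith
  set F : ℝ → ℂ := fun t => ∫ s in (0:ℝ)..t, χ s with hF
  have hFderiv : ∀ t, HasDerivAt F (χ t) t := fun t =>
    intervalIntegral.integral_hasDerivAt_right (hInt 0 t)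
      (hcont.stronglyMeasurableAtFilter _ _) hcont.continuousAt
  have hrep : ∀ t, χ t = I₀⁻¹ * (F (t + a) - F t) := by
    intro t
    have h1 : F (t + a) - F t = ∫ s in t..(t+a), χ s := by
      show (∫ s in (0:ℝ)..(t+a), χ s) - ∫ s in (0:ℝ)..t, χ s = _
      rw [← intervalIntegral.integral_add_adjacent_intervals (hInt 0 t) (hInt t (t+a))]
      ring
    have h2 : (∫ s in t..(t+a), χ s) = ∫ s in (0:ℝ)..a, χ (t + s) := by
      rw [intervalIntegral.integral_comp_add_left (fun x => χ x) t]
      norm_num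
    have h3 : (∫ s in (0:ℝ)..a, χ (t + s)) = χ t * I₀ := by
      rw [hI₀, ← intervalIntegral.integral_const_mul]
      congr 1; ext s; exact hadd t s
    rw [h1, h2, h3]
    field_simp
  set l : ℂ := (χ a - 1) / I₀ with hl
  have hχderiv : ∀ t, HasDerivAt χ (l * χ t) t := by
    intro t
    have hG : HasDerivAt (fun t => I₀⁻¹ * (F (t + a) - F t)) (I₀⁻¹ * (χ (t+a) - χ t)) t := by
      have h1 : HasDerivAt (fun t => F (t + a)) (χ (t + a)) t := by
        simpa using (hFderiv (t + a)).comp_add_const t a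
      exact ((h1.sub (hFderiv t)).const_mul _)
    have heq : I₀⁻¹ * (χ (t+a) - χ t) = l * χ t := by
      rw [hadd t a, hl]; field_simp
    rw [heq] at hG
    exact hG.congr_of_eventuallyEq (Filter.Eventually.of_forall fun x => hrep x)
  refine ⟨l, fun t => ?_⟩
  set g : ℝ → ℂ := fun t => χ t * Complex.exp (-(l * t)) with hg
  have hgd : ∀ t, HasDerivAt g 0 t := by
    intro t
    have he : HasDerivAt (fun t : ℝ => Complex.exp (-(l * t))) (-l * Complex.exp (-(l * t))) t := by
      have harg : HasDerivAt (fun t : ℝ => -(l * t)) (-l) t := by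
        exact (((hasDerivAt_id t).ofReal_comp.const_mul l).neg).congr_deriv (by simp)
      simpa [mul_comm] using harg.cexp
    have := (hχderiv t).mul he
    exact this.congr_deriv (by ring)
  have hconst : g t = g 0 := by
    have hdiff : Differentiable ℝ g := fun x => (hgd x).differentiableAt
    have hz : ∀ x, deriv g x = 0 := fun x => (hgd x).deriv
    exact is_const_of_deriv_eq_zero hdiff hz t 0
  have : χ t * Complex.exp (-(l * t)) = 1 := by
    simpa [hg, h0] using hconst
  have hexp : Complex.exp (-(l*t)) * Complex.exp (l*t) = 1 := by
    rw [← Complex.exp_add]; simp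
  calc χ t = χ t * (Complex.exp (-(l*t)) * Complex.exp (l*t)) := by rw [hexp, mul_one]
    _ = (χ t * Complex.exp (-(l*t))) * Complex.exp (l*t) := by ring
    _ = Complex.exp (l * t) := by rw [this, one_mul]

/-- Classification of continuous characters of `ℝ` with values in `AddCircle 1`. -/
lemma char_real_addCircle_aux (f : ℝ →+ AddCircle (1:ℝ)) (hf : Continuous f) :
    ∃ c : ℝ, ∀ t, f t = ((t * c : ℝ) : AddCircle (1:ℝ)) := by
  set χ : ℝ → ℂ := fun t => (AddCircle.toCircle (f t) : ℂ) with hχ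
  have hcont : Continuous χ :=
    continuous_subtype_val.comp (AddCircle.continuous_toCircle.comp hf)
  have h0 : χ 0 = 1 := by simp [hχ]
  have hadd : ∀ s t, χ (s + t) = χ s * χ t := by
    intro s t
    show (AddCircle.toCircle (f (s+t)) : ℂ)
      = (AddCircle.toCircle (f s) : ℂ) * (AddCircle.toCircle (f t) : ℂ)
    rw [map_add, AddCircle.toCircle_add, Circle.coe_mul]
  obtain ⟨l, hl⟩ := char_exp_aux χ hcont h0 hadd
  have hnorm : ∀ t : ℝ, ‖χ t‖ = 1 := fun t => Circle.norm_coe (AddCircle.toCircle (f t))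
  have hre : l.re = 0 := by
    have := hnorm 1
    rw [hl 1, Complex.norm_exp] at this
    have h2 : (l * (1:ℝ)).re = l.re := by simp
    rw [h2] at this
    rw [← Real.exp_zero] at this
    exact Real.exp_eq_exp.mp this
  refine ⟨l.im / (2 * π), fun t => ?_⟩
  apply AddCircle.injective_toCircle (one_ne_zero)
  apply Subtype.coe_injective
  show χ t = _
  rw [hl t, AddCircle.toCircle_apply_mk]
  show _ = (Circle.exp _ : ℂ)
  rw [Circle.coe_exp]
  congr 1
  have hlim : l = (l.im : ℂ) * Complex.I := by
    apply Complex.ext <;> simp [hre]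
  have harg : 2 * π / 1 * (t * (l.im / (2 * π))) = t * l.im := by
    field_simp
  rw [harg]
  conv_lhs => rw [hlim]
  push_cast
  ring

variable {E : Type*} [NormedAddCommGroup E] [InnerProductSpace ℝ E]

/-- Classification of continuous characters of a finite-dimensional inner product space. -/
lemma char_E_aux [FiniteDimensional ℝ E] (g : E →+ AddCircle (1:ℝ)) (hg : Continuous g) :
    ∃ y : E, ∀ x, g x = ((⟪x, y⟫ : ℝ) : AddCircle (1:ℝ)) := by
  set b := stdOrthonormalBasis ℝ E with hb
  have hline : ∀ i, ∃ c : ℝ, ∀ t : ℝ, g (t • b i) = ((t * c : ℝ) : AddCircle (1:ℝ)) := by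
    intro i
    set f : ℝ →+ AddCircle (1:ℝ) :=
      AddMonoidHom.mk' (fun t => g (t • b i)) (by
        intro s t; show g ((s + t) • b i) = g (s • b i) + g (t • b i)
        rw [add_smul, map_add]) with hf
    have hfc : Continuous f := hg.comp (continuous_id.smul continuous_const)
    exact char_real_addCircle_aux f hfc
  choose c hc using hline
  refine ⟨∑ i, c i • b i, fun x => ?_⟩
  have hx : x = ∑ i, b.repr x i • b i := (b.sum_repr x).symm
  have hinner : ⟪x, ∑ i, c i • b i⟫ = ∑ i, b.repr x i * c i := by
    rw [inner_sum]
    congr 1; ext i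
    rw [real_inner_smul_right, real_inner_comm, ← b.repr_apply_apply]
    ring
  rw [hinner]
  conv_lhs => rw [hx]
  rw [map_sum]
  have : ∀ i ∈ Finset.univ, g (b.repr x i • b i)
      = ((b.repr x i * c i : ℝ) : AddCircle (1:ℝ)) := fun i _ => hc i _
  rw [Finset.sum_congr rfl this]
  exact (map_sum (QuotientAddGroup.mk' (AddSubgroup.zmultiples (1:ℝ)))
    (fun i => b.repr x i * c i) Finset.univ).symm

/-- The quotient of a finite-dimensional space by a spanning subgroup is compact. -/
lemma compact_quot_aux [FiniteDimensional ℝ E] (Λ : AddSubgroup E)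
    (hspan : Submodule.span ℝ (Λ : Set E) = ⊤) : CompactSpace (E ⧸ Λ) := by
  obtain ⟨s, hsub, hspan', hli⟩ := exists_linearIndependent ℝ (Λ : Set E)
  have hfin : s.Finite := hli.setFinite
  haveI := hfin.fintype
  let b : Module.Basis s ℝ E := Module.Basis.mk hli (by rw [Subtype.range_coe, hspan', hspan])
  set K : Set E := (fun c : s → ℝ => ∑ i, c i • (i : E)) '' (Set.univ.pi fun _ => Set.Icc (0:ℝ) 1)
    with hK
  have hKc : IsCompact K := by
    apply IsCompact.image (isCompact_univ_pi fun _ => isCompact_Icc)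
    exact continuous_finset_sum _ fun i _ => (continuous_apply i).smul continuous_const
  have hsurj : ∀ x : E ⧸ Λ, ∃ k ∈ K, (QuotientAddGroup.mk k : E ⧸ Λ) = x := by
    intro x
    induction x using QuotientAddGroup.induction_on with
    | H v =>
      obtain ⟨r, hv⟩ : ∃ r : s → ℝ, v = ∑ i, r i • (i : E) := by
        refine ⟨fun i => b.repr v i, ?_⟩
        conv_lhs => rw [← b.sum_repr v]
        exact Finset.sum_congr rfl fun i _ => by simp [b]
      refine ⟨∑ i, Int.fract (r i) • (i : E), ⟨fun i => Int.fract (r i),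
        fun i _ => ⟨(Int.fract_nonneg _), (Int.fract_lt_one _).le⟩, rfl⟩, ?_⟩
      rw [QuotientAddGroup.eq_iff_sub_mem]
      have heq : (∑ i, Int.fract (r i) • (i : E)) - v = ∑ i, (-⌊r i⌋) • (i : E) := by
        conv_lhs => rw [hv]
        rw [← Finset.sum_sub_distrib]
        refine Finset.sum_congr rfl fun i _ => ?_
        rw [← sub_smul, Int.fract, ← Int.cast_smul_eq_zsmul ℝ]
        push_cast
        ring_nf
      rw [heq]
      exact AddSubgroup.sum_mem Λ fun i _ => AddSubgroup.zsmul_mem Λ (hsub i.2) _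
  constructor
  have h2 : QuotientAddGroup.mk '' K = (Set.univ : Set (E ⧸ Λ)) := by
    refine Set.eq_univ_iff_forall.mpr fun x => ?_
    obtain ⟨k, hk, hkx⟩ := hsurj x
    exact ⟨k, hk, hkx⟩
  rw [← h2]
  exact hKc.image continuous_quotient_mk'

end Aux

variable (E : Type*) [NormedAddCommGroup E] [InnerProductSpace ℝ E]

/-- the dual lattice `Λ* = {y ∈ E : ⟨x,y⟩ ∈ ℤ for all x ∈ Λ}` of a subgroup `Λ ⊆ E` -/
noncomputable def dualLattice (Λ : AddSubgroup E) : AddSubgroup E where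
  carrier := {y | ∀ x ∈ Λ, ∃ m : ℤ, ⟪x, y⟫ = (m : ℝ)}
  add_mem' := by
    rintro y z hy hz x hx
    obtain ⟨m, hm⟩ := hy x hx
    obtain ⟨m', hm'⟩ := hz x hx
    exact ⟨m + m', by rw [inner_add_right, hm, hm']; push_cast; ring⟩
  zero_mem' := fun x _ => ⟨0, by rw [inner_zero_right]; norm_num⟩
  neg_mem' := by
    rintro y hy x hx
    obtain ⟨m, hm⟩ := hy x hx
    exact ⟨-m, by rw [inner_neg_right, hm]; push_cast; ring⟩

theorem statement8 [FiniteDimensional ℝ E] (Λ : AddSubgroup E)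
    (hdisc : DiscreteTopology Λ) (hspan : Submodule.span ℝ (Λ : Set E) = ⊤) :
    DiscreteTopology (ContinuousAddMonoidHom (E ⧸ Λ) (AddCircle (1 : ℝ))) ∧
    ∃ e : dualLattice E Λ ≃+ ContinuousAddMonoidHom (E ⧸ Λ) (AddCircle (1 : ℝ)),
      ∀ (y : dualLattice E Λ) (x : E),
        e y (QuotientAddGroup.mk x) = ((⟪x, (y : E)⟫ : ℝ) : AddCircle (1 : ℝ)) := by
  haveI : CompactSpace (E ⧸ Λ) := compact_quot_aux Λ hspan
  -- basic facts about `AddCircle 1`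
  have hint0 : ∀ m : ℤ, ((m : ℝ) : AddCircle (1:ℝ)) = 0 := fun m => by
    rw [AddCircle.coe_eq_zero_iff]; exact ⟨m, by simp⟩
  have hzero : ∀ r : ℝ, ((r : ℝ) : AddCircle (1:ℝ)) = 0 → ∃ m : ℤ, r = m := by
    intro r hr
    rw [AddCircle.coe_eq_zero_iff] at hr
    obtain ⟨m, hm⟩ := hr
    exact ⟨m, by simpa using hm.symm⟩
  have hhalf : ¬ ∃ m : ℤ, (1/2 : ℝ) = (m : ℝ) := by
    rintro ⟨m, hm⟩
    have h1 : ((2 * m : ℤ) : ℝ) = ((1 : ℤ) : ℝ) := by push_cast; linarith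
    have := Int.cast_injective (α := ℝ) h1
    omega
  have hy0 : ∀ y : E, (∀ x : E, ((⟪x, y⟫ : ℝ) : AddCircle (1:ℝ)) = 0) → y = 0 := by
    intro y hy
    by_contra hne
    have hyy : ⟪y, y⟫ ≠ 0 := fun h => hne (inner_self_eq_zero.mp h)
    obtain ⟨m, hm⟩ := hzero _ (hy ((2 * ⟪y, y⟫)⁻¹ • y))
    rw [real_inner_smul_left] at hm
    have h12 : (2 * ⟪y, y⟫)⁻¹ * ⟪y, y⟫ = 1/2 := by
      field_simp
    rw [h12] at hm
    exact hhalf ⟨m, hm⟩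
  -- the character attached to `y : E`
  let g : E → E →+ AddCircle (1:ℝ) := fun y =>
    AddMonoidHom.mk' (fun x => ((⟪x, y⟫ : ℝ) : AddCircle (1:ℝ))) (by
      intro a b
      show ((⟪a + b, y⟫ : ℝ) : AddCircle (1:ℝ)) = _
      rw [inner_add_left, QuotientAddGroup.mk_add])
  have hg_cont : ∀ y, Continuous (g y) :=
    fun y => continuous_quotient_mk'.comp (Continuous.inner continuous_id continuous_const)
  have hg_van : ∀ y : dualLattice E Λ, ∀ x ∈ Λ, g (y : E) x = 0 := by
    intro y x hx
    obtain ⟨m, hm⟩ := y.2 x hx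
    show ((⟪x, (y:E)⟫ : ℝ) : AddCircle (1:ℝ)) = 0
    rw [hm]; exact hint0 m
  -- the map to the dual group
  let F : dualLattice E Λ → ContinuousAddMonoidHom (E ⧸ Λ) (AddCircle (1:ℝ)) := fun y =>
    ⟨QuotientAddGroup.lift Λ (g (y : E)) (hg_van y),
      ((QuotientAddGroup.isQuotientMap_mk Λ).continuous_iff.mpr (hg_cont (y : E)))⟩
  have hFapp : ∀ (y : dualLattice E Λ) (x : E),
      F y (QuotientAddGroup.mk x) = ((⟪x, (y : E)⟫ : ℝ) : AddCircle (1:ℝ)) := fun y x => rfl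
  have hFadd : ∀ y z, F (y + z) = F y + F z := by
    intro y z
    apply ContinuousAddMonoidHom.ext
    intro q
    induction q using QuotientAddGroup.induction_on with
    | H x =>
      show F (y + z) (QuotientAddGroup.mk x)
        = F y (QuotientAddGroup.mk x) + F z (QuotientAddGroup.mk x)
      rw [hFapp, hFapp, hFapp]
      rw [show ((y + z : dualLattice E Λ) : E) = (y : E) + (z : E) from rfl,
        inner_add_right, QuotientAddGroup.mk_add]
  have hinj : Function.Injective F := by
    intro y z h
    have hsub : ∀ x : E, ((⟪x, (y:E) - (z:E)⟫ : ℝ) : AddCircle (1:ℝ)) = 0 := by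
      intro x
      have h1 := DFunLike.congr_fun h (QuotientAddGroup.mk x)
      rw [hFapp, hFapp] at h1
      rw [inner_sub_right, QuotientAddGroup.mk_sub, h1, sub_self]
    have : (y:E) - (z:E) = 0 := hy0 _ hsub
    exact Subtype.ext (by linear_combination (norm := module) this)
  have hsurj : Function.Surjective F := by
    intro f
    set g' : E →+ AddCircle (1:ℝ) :=
      AddMonoidHom.mk' (fun x => f (QuotientAddGroup.mk x)) (by
        intro a b
        show f (QuotientAddGroup.mk (a + b))
          = f (QuotientAddGroup.mk a) + f (QuotientAddGroup.mk b)
        rw [QuotientAddGroup.mk_add, map_add]) with hg'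
    have hg'c : Continuous g' := f.continuous_toFun.comp continuous_quotient_mk'
    obtain ⟨y, hy⟩ := char_E_aux g' hg'c
    have hymem : y ∈ dualLattice E Λ := by
      intro x hx
      apply hzero
      have h1 : (QuotientAddGroup.mk x : E ⧸ Λ) = 0 := (QuotientAddGroup.eq_zero_iff x).mpr hx
      have h2 := hy x
      rw [show g' x = f (QuotientAddGroup.mk x) from rfl, h1, map_zero] at h2
      exact h2.symm
    refine ⟨⟨y, hymem⟩, ?_⟩
    apply ContinuousAddMonoidHom.ext
    intro q
    induction q using QuotientAddGroup.induction_on with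
    | H x => exact (hy x).symm
  -- discreteness
  have hdiscD : DiscreteTopology (ContinuousAddMonoidHom (E ⧸ Λ) (AddCircle (1:ℝ))) := by
    rw [discreteTopology_iff_isOpen_singleton_zero]
    set U : Set (AddCircle (1:ℝ)) := QuotientAddGroup.mk '' (Set.Ioo (-(1/3) : ℝ) (1/3)) with hU
    have hUopen : IsOpen U := QuotientAddGroup.isOpenMap_coe _ isOpen_Ioo
    have h0U : (0 : AddCircle (1:ℝ)) ∈ U :=
      ⟨0, by norm_num, by simp⟩
    have hhalfU : ((1/2 : ℝ) : AddCircle (1:ℝ)) ∉ U := by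
      rintro ⟨r, hr, hrq⟩
      have : ((1/2 - r : ℝ) : AddCircle (1:ℝ)) = 0 := by
        rw [show (1/2 - r : ℝ) = 1/2 + (-r) by ring, QuotientAddGroup.mk_add,
          QuotientAddGroup.mk_neg, hrq]
        abel
      obtain ⟨m, hm⟩ := hzero _ this
      have hmlt : (0:ℝ) < (m:ℝ) ∧ (m:ℝ) < 1 := by
        constructor <;> [skip; skip] <;> rw [← hm] <;>
          [linarith [hr.2]; linarith [hr.1]]
      have h0m : 0 < m := by exact_mod_cast hmlt.1
      have h1m : m < 1 := by exact_mod_cast hmlt.2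
      omega
    have hkey : {f : ContinuousAddMonoidHom (E ⧸ Λ) (AddCircle (1:ℝ)) |
        Set.MapsTo f Set.univ U} = {0} := by
      apply Set.eq_singleton_iff_unique_mem.mpr
      constructor
      · intro x _
        show (0 : ContinuousAddMonoidHom (E ⧸ Λ) (AddCircle (1:ℝ))) x ∈ U
        rw [show (0 : ContinuousAddMonoidHom (E ⧸ Λ) (AddCircle (1:ℝ))) x = 0 from rfl]
        exact h0U
      · intro f hf
        set g' : E →+ AddCircle (1:ℝ) :=
          AddMonoidHom.mk' (fun x => f (QuotientAddGroup.mk x)) (by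
            intro a b
            show f (QuotientAddGroup.mk (a + b))
              = f (QuotientAddGroup.mk a) + f (QuotientAddGroup.mk b)
            rw [QuotientAddGroup.mk_add, map_add]) with hg'
        have hg'c : Continuous g' := f.continuous_toFun.comp continuous_quotient_mk'
        obtain ⟨y, hy⟩ := char_E_aux g' hg'c
        have hyzero : y = 0 := by
          by_contra hne
          have hyy : ⟪y, y⟫ ≠ 0 := fun h => hne (inner_self_eq_zero.mp h)
          have hval := hy ((2 * ⟪y, y⟫)⁻¹ • y)
          rw [real_inner_smul_left] at hval
          have h12 : (2 * ⟪y, y⟫)⁻¹ * ⟪y, y⟫ = 1/2 := by field_simp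
          rw [h12] at hval
          have : f (QuotientAddGroup.mk ((2 * ⟪y, y⟫)⁻¹ • y)) ∈ U := hf (Set.mem_univ _)
          rw [show f (QuotientAddGroup.mk ((2 * ⟪y, y⟫)⁻¹ • y))
            = g' ((2 * ⟪y, y⟫)⁻¹ • y) from rfl, hval] at this
          exact hhalfU this
        apply ContinuousAddMonoidHom.ext
        intro q
        induction q using QuotientAddGroup.induction_on with
        | H x =>
          have := hy x
          rw [hyzero] at this
          rw [show f (QuotientAddGroup.mk x) = g' x from rfl, this, inner_zero_right]
          rfl
    rw [← hkey]
    have : {f : ContinuousAddMonoidHom (E ⧸ Λ) (AddCircle (1:ℝ)) | Set.MapsTo f Set.univ U}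
        = ContinuousAddMonoidHom.toContinuousMap ⁻¹'
          {g : C(E ⧸ Λ, AddCircle (1:ℝ)) | Set.MapsTo g Set.univ U} := rfl
    rw [this]
    exact (ContinuousAddMonoidHom.isInducing_toContinuousMap _ _).continuous.isOpen_preimage _
      (ContinuousMap.isOpen_setOf_mapsTo isCompact_univ hUopen)
  refine ⟨hdiscD, AddEquiv.ofBijective (AddMonoidHom.mk' F hFadd) ⟨hinj, hsurj⟩, fun y x => ?_⟩
  exact hFapp y x
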